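/- In the Friedkin-Johnsen model, with s = BK1, P = I − (1 κᵀ)/(Σ_v κ_v), and s̃ = Pᵀ s, the identity P(L+K)⁻¹ s = (L+K)⁻¹ s̃ holds. -/
import Mathlib


open Matrix

noncomputable section

/-- Moore–Penrose pseudoinverse conditions. -/
def IsMoorePenrose {V : Type*} [Fintype V] [DecidableEq V]
    (L Lp : Matrix V V ℝ) : Prop :=
  L * Lp * L = L ∧ Lp * L * Lp = Lp ∧ (L * Lp)ᵀ = L * Lp ∧ (Lp * L)ᵀ = Lp * L

/-- Laplacian of a weighted graph given by weight function `w`. -/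
def lapOf {V : Type*} [Fintype V] [DecidableEq V] (w : V → V → ℝ) : Matrix V V ℝ :=
  Matrix.of fun i j => if i = j then ∑ k, w i k else - w i j

/-- The vector `e_u - e_v`. -/
def bvec {V : Type*} [DecidableEq V] (u v : V) : V → ℝ :=
  Pi.single u 1 - Pi.single v 1

/-- The all-ones matrix. -/
def onesM (V : Type*) [Fintype V] : Matrix V V ℝ := Matrix.of fun _ _ => 1

theorem fj_P_identity {n : ℕ}
    (w : Fin n → Fin n → ℝ) (L : Matrix (Fin n) (Fin n) ℝ)
    (κ β : Fin n → ℝ)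
    (hw0 : ∀ i, w i i = 0) (hwsymm : ∀ i j, w i j = w j i) (hwnn : ∀ i j, 0 ≤ w i j)
    (hL : L = lapOf w)
    (hconn : ∀ x : Fin n → ℝ, L *ᵥ x = 0 → ∃ c : ℝ, x = fun _ => c)
    (hκ : ∀ v, 0 < κ v) (hβ : ∀ v, β v ∈ Set.Icc (0 : ℝ) 1)
    (P : Matrix (Fin n) (Fin n) ℝ)
    (hP : P = (1 : Matrix (Fin n) (Fin n) ℝ) -
      (∑ v, κ v)⁻¹ • vecMulVec (fun _ => 1) κ)
    (s stilde : Fin n → ℝ)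
    (hsdef : s = (diagonal β * diagonal κ) *ᵥ fun _ => 1)
    (hstilde : stilde = Pᵀ *ᵥ s) :
    P *ᵥ ((L + diagonal κ)⁻¹ *ᵥ s) = (L + diagonal κ)⁻¹ *ᵥ stilde := by
  classical
  set M : Matrix (Fin n) (Fin n) ℝ := L + diagonal κ with hM
  have e1 : ∀ i j, L i j = (if i = j then ∑ k, w i k else 0) - w i j := by
    intro i j
    by_cases h : i = j
    · subst h; simp [hL, lapOf, hw0 i]
    · simp [hL, lapOf, h]
  -- L is symmetric
  have hLsymm : Lᵀ = L := by
    ext i j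
    rw [transpose_apply, e1, e1, hwsymm j i]
    by_cases h : i = j
    · subst h; simp
    · simp [h, Ne.symm h]
  have hMsymm : Mᵀ = M := by
    rw [hM, transpose_add, hLsymm, diagonal_transpose]
  -- row sums of L entries
  have hLrow : ∀ i, ∑ j, L i j = 0 := by
    intro i
    simp only [e1]
    rw [Finset.sum_sub_distrib]
    simp [Finset.sum_ite_eq]
  -- L 1 = 0
  have hL1 : L *ᵥ (fun _ => 1) = 0 := by
    funext i
    simp only [mulVec, dotProduct, mul_one, Pi.zero_apply]
    exact hLrow i
  -- M 1 = κ
  have hM1 : M *ᵥ (fun _ => 1) = κ := by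
    rw [hM, add_mulVec, hL1]
    funext i
    simp [mulVec, dotProduct, diagonal, ite_mul, Finset.sum_ite_eq]
  -- L is PSD
  have hPSD : ∀ x : Fin n → ℝ, 0 ≤ x ⬝ᵥ (L *ᵥ x) := by
    intro x
    have hrow : ∀ i, (L *ᵥ x) i = (∑ j, w i j) * x i - ∑ j, w i j * x j := by
      intro i
      simp only [mulVec, dotProduct, e1, sub_mul]
      rw [Finset.sum_sub_distrib]
      congr 1
      simp [ite_mul, Finset.sum_ite_eq]
    have expand : x ⬝ᵥ (L *ᵥ x)
        = ∑ i, ∑ j, (w i j * (x i * x i) - w i j * (x i * x j)) := by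
      simp only [dotProduct, hrow]
      apply Finset.sum_congr rfl
      intro i _
      have hj : ∀ j, w i j * (x i * x i) - w i j * (x i * x j)
          = x i * (w i j * x i) - x i * (w i j * x j) := fun j => by ring
      simp only [hj]
      rw [Finset.sum_sub_distrib, ← Finset.mul_sum, ← Finset.mul_sum, ← mul_sub,
        ← Finset.sum_mul]
    have swap : ∑ i, ∑ j, w i j * (x j * x j) = ∑ i, ∑ j, w i j * (x i * x i) := by
      rw [Finset.sum_comm]
      apply Finset.sum_congr rfl
      intro i _
      apply Finset.sum_congr rfl
      intro j _
      rw [hwsymm j i]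
    have sq_expand : ∑ i, ∑ j, w i j * (x i - x j) ^ 2
        = 2 * ∑ i, ∑ j, (w i j * (x i * x i) - w i j * (x i * x j)) := by
      have : ∀ i j, w i j * (x i - x j) ^ 2
          = (w i j * (x i * x i) - w i j * (x i * x j))
            + (w i j * (x j * x j) - w i j * (x i * x j)) := by
        intro i j; ring
      simp only [this, Finset.sum_add_distrib]
      have swap2 : ∑ i, ∑ j, (w i j * (x j * x j) - w i j * (x i * x j))
          = ∑ i, ∑ j, (w i j * (x i * x i) - w i j * (x i * x j)) := by
        rw [Finset.sum_comm]
        apply Finset.sum_congr rfl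
        intro i _
        apply Finset.sum_congr rfl
        intro j _
        rw [hwsymm j i, mul_comm (x i) (x j)]
      rw [swap2]; ring
    have hnn : 0 ≤ ∑ i, ∑ j, w i j * (x i - x j) ^ 2 := by
      apply Finset.sum_nonneg
      intro i _
      apply Finset.sum_nonneg
      intro j _
      exact mul_nonneg (hwnn i j) (sq_nonneg _)
    rw [expand]
    nlinarith [hnn, sq_expand]
  -- M is invertible
  have hdet : IsUnit M.det := by
    rw [isUnit_iff_ne_zero]
    intro hdz
    obtain ⟨v, hv0, hMv⟩ := (Matrix.exists_mulVec_eq_zero_iff).2 hdz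
    have h0 : v ⬝ᵥ (M *ᵥ v) = 0 := by rw [hMv]; simp
    have hsplit : v ⬝ᵥ (M *ᵥ v) = v ⬝ᵥ (L *ᵥ v) + ∑ i, κ i * (v i * v i) := by
      rw [hM, add_mulVec, dotProduct_add]
      congr 1
      simp only [dotProduct, mulVec, diagonal, dotProduct]
      apply Finset.sum_congr rfl
      intro i _
      simp [ite_mul, Finset.sum_ite_eq]
      ring
    have hκnn : 0 ≤ ∑ i, κ i * (v i * v i) := by
      apply Finset.sum_nonneg
      intro i _
      have := mul_self_nonneg (v i)
      exact mul_nonneg (hκ i).le this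
    have hqzero : ∑ i, κ i * (v i * v i) = 0 := by
      have := hPSD v
      linarith [hsplit ▸ h0]
    have : ∀ i ∈ Finset.univ, κ i * (v i * v i) = 0 := by
      intro i _
      have := (Finset.sum_eq_zero_iff_of_nonneg (fun i _ =>
        mul_nonneg (hκ i).le (mul_self_nonneg (v i)))).1 hqzero
      exact this i (Finset.mem_univ i)
    apply hv0
    funext i
    have hi := this i (Finset.mem_univ i)
    have : v i * v i = 0 := by
      rcases mul_eq_zero.1 hi with h | h
      · exact absurd h (hκ i).ne'
      · exact h
    exact mul_self_eq_zero.1 this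
  have hMinv : M⁻¹ * M = 1 := nonsing_inv_mul M hdet
  have hinvM : M * M⁻¹ = 1 := mul_nonsing_inv M hdet
  -- M⁻¹ κ = 1
  have hinvκ : M⁻¹ *ᵥ κ = fun _ => 1 := by
    rw [← hM1, mulVec_mulVec, hMinv, one_mulVec]
  -- M⁻¹ is symmetric
  have hMinvsymm : (M⁻¹)ᵀ = M⁻¹ := by
    rw [transpose_nonsing_inv, hMsymm]
  -- key: κ ⬝ᵥ (M⁻¹ *ᵥ s) = ∑ j, s j
  have hkey : κ ⬝ᵥ (M⁻¹ *ᵥ s) = ∑ j, s j := by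
    rw [dotProduct_mulVec]
    have : κ ᵥ* M⁻¹ = fun _ => (1 : ℝ) := by
      rw [← mulVec_transpose, hMinvsymm, hinvκ]
    rw [this]
    simp [dotProduct]
  -- compute stilde
  have hPT : Pᵀ = (1 : Matrix (Fin n) (Fin n) ℝ) -
      (∑ v, κ v)⁻¹ • vecMulVec κ (fun _ => 1) := by
    rw [hP, transpose_sub, transpose_one, transpose_smul]
    congr 1
    ext i j
    simp [vecMulVec_apply, mul_comm]
  have hstilde' : stilde = s - ((∑ v, κ v)⁻¹ * ∑ j, s j) • κ := by
    rw [hstilde, hPT, sub_mulVec, one_mulVec, smul_mulVec]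
    congr 1
    funext i
    simp only [Pi.smul_apply, mulVec, vecMulVec_apply, dotProduct, smul_eq_mul,
      Finset.mul_sum]
    rw [Finset.sum_mul]
    apply Finset.sum_congr rfl
    intro j _; ring
  -- final computation
  rw [hstilde', mulVec_sub, mulVec_smul, hinvκ]
  rw [hP, sub_mulVec, one_mulVec, smul_mulVec]
  congr 1
  funext i
  have hv : (vecMulVec (fun _ => (1:ℝ)) κ *ᵥ (M⁻¹ *ᵥ s)) i = κ ⬝ᵥ (M⁻¹ *ᵥ s) := by
    simp [mulVec, vecMulVec_apply, dotProduct]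
  simp only [Pi.smul_apply, smul_eq_mul, hv, hkey]
  rw [mul_one]
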